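/- arXiv:1109.3723 — 2 statements merged into one kernel-verified Lean document; each statement's English description precedes it below -/
import Mathlib

section
/- Let m ≥ 2 be an integer and let 0 → A → B → C → 0 be a short exact sequence of finite m-torsion abelian groups. If A or C is isomorphic to (ℤ/mℤ)^n for some n, then rk_m(B) = rk_m(A) + rk_m(C). -/
/-- The `m`-rank of an abelian group: the largest `r` such that `(ℤ/mℤ)^r`
embeds into `G`. -/
noncomputable def mrank (m : ℕ) (G : Type*) [AddCommGroup G] : ℕ :=
  sSup {r : ℕ | ∃ f : (Fin r → ZMod m) →+ G, Function.Injective f}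

namespace MrankAux



lemma exists_mul_of_ann (m : ℕ) (hm : m ≠ 0) (d y : ZMod m)
    (h : ∀ x : ZMod m, x * d = 0 → x * y = 0) : ∃ z : ZMod m, y = d * z := by
  haveI : NeZero m := ⟨hm⟩
  set D := d.val with hD
  set G := Nat.gcd D m with hG
  have hGm : G ∣ m := Nat.gcd_dvd_right D m
  have hGD : G ∣ D := Nat.gcd_dvd_left D m
  have hG0 : G ≠ 0 := fun h0 => hm (Nat.eq_zero_of_gcd_eq_zero_right h0)
  have h1 : ((m / G : ℕ) : ZMod m) * d = 0 := by
    conv_lhs => rw [← ZMod.natCast_zmod_val d]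
    rw [← Nat.cast_mul, ZMod.natCast_eq_zero_iff]
    obtain ⟨D', hD'⟩ := hGD
    exact ⟨D', by rw [show d.val = G * D' from hD', ← mul_assoc, Nat.div_mul_cancel hGm]⟩
  have h2 := h _ h1
  have h3 : ((m / G : ℕ) : ZMod m) * y = ((m / G * y.val : ℕ) : ZMod m) := by
    push_cast [ZMod.natCast_zmod_val]; ring
  rw [h3, ZMod.natCast_eq_zero_iff] at h2
  obtain ⟨t, ht⟩ := h2
  have hmG : G * (m / G) = m := Nat.mul_div_cancel' hGm
  have hmG0 : 0 < m / G := Nat.div_pos (Nat.le_of_dvd (Nat.pos_of_ne_zero hm) hGm)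
    (Nat.pos_of_ne_zero hG0)
  have hGy : y.val = G * t := by
    have hh : m / G * y.val = m / G * (G * t) := by
      rw [ht]; conv_rhs => rw [← mul_assoc, Nat.div_mul_cancel hGm]
    exact Nat.eq_of_mul_eq_mul_left hmG0 hh
  have hbez := Nat.gcd_eq_gcd_ab D m
  have h4 : (G : ZMod m) = d * ((Nat.gcdA D m : ℤ) : ZMod m) := by
    have h5 := congrArg (fun z : ℤ => ((z : ZMod m))) hbez
    push_cast at h5
    rw [ZMod.natCast_zmod_val, ZMod.natCast_self] at h5
    simpa using h5
  refine ⟨((Nat.gcdA D m : ℤ) : ZMod m) * t, ?_⟩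
  calc y = (y.val : ZMod m) := (ZMod.natCast_zmod_val y).symm
    _ = ((G * t : ℕ) : ZMod m) := by rw [hGy]
    _ = (G : ZMod m) * t := by push_cast; ring
    _ = d * (((Nat.gcdA D m : ℤ) : ZMod m) * t) := by rw [h4]; ring

lemma baer_zmod (m : ℕ) (hm : m ≠ 0) : Module.Baer (ZMod m) (ZMod m) := by
  haveI : NeZero m := ⟨hm⟩
  haveI : IsPrincipalIdealRing (ZMod m) :=
    IsPrincipalIdealRing.of_surjective (Int.castRingHom (ZMod m)) ZMod.intCast_surjective
  intro I g
  obtain ⟨d, rfl⟩ := (IsPrincipalIdealRing.principal I).principal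
  have hdI : d ∈ Ideal.span {d} := Ideal.mem_span_singleton_self d
  set y := g ⟨d, hdI⟩ with hy
  have hann : ∀ x : ZMod m, x * d = 0 → x * y = 0 := by
    intro x hx
    have h1 : (x • (⟨d, hdI⟩ : Ideal.span ({d} : Set (ZMod m)))) = 0 := by
      ext; simpa [smul_eq_mul] using hx
    calc x * y = x • y := rfl
      _ = g (x • ⟨d, hdI⟩) := (g.map_smul x _).symm
      _ = 0 := by rw [h1, map_zero]
  obtain ⟨z, hz⟩ := exists_mul_of_ann m hm d y hann
  refine ⟨LinearMap.toSpanSingleton (ZMod m) (ZMod m) z, ?_⟩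
  intro x hx
  obtain ⟨c, rfl⟩ := Ideal.mem_span_singleton'.mp hx
  have h2 : (⟨c * d, hx⟩ : Ideal.span ({d} : Set (ZMod m))) = c • ⟨d, hdI⟩ := by
    ext; simp [smul_eq_mul]
  rw [h2, map_smul]
  simp only [LinearMap.toSpanSingleton_apply]
  rw [← hy, smul_eq_mul, smul_eq_mul, hz]
  ring

lemma inj_ulift (m : ℕ) (hm : m ≠ 0) :
    Module.Injective (ZMod m) (ULift.{v} (ZMod m)) :=
  Module.ulift_injective_of_injective _ ((baer_zmod m hm).injective)

lemma map_zmod_smulAux {m : ℕ} {M N : Type*} [AddCommGroup M] [AddCommGroup N]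
    [Module (ZMod m) M] [Module (ZMod m) N] (φ : M →+ N) (x : ZMod m) (v : M) :
    φ (x • v) = x • φ v := by
  obtain ⟨k, rfl⟩ := ZMod.intCast_surjective x
  rw [Int.cast_smul_eq_zsmul, Int.cast_smul_eq_zsmul, map_zsmul]



lemma pair_exists (m : ℕ) [NeZero m] (a b : ZMod m) :
    ∃ p q a' b' : ZMod m, a * b' = b * a' ∧ a' * p + b' * q = 1 ∧
      ∃ α β : ZMod m, α * a' + β * b' = 1 := by
  by_cases hab : a = 0 ∧ b = 0
  · exact ⟨1, 0, 1, 0, by simp [hab.1, hab.2], by ring, 1, 0, by ring⟩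
  · set A : ℤ := (a.val : ℤ) with hAdef
    set B : ℤ := (b.val : ℤ) with hBdef
    have hG : Int.gcd A B ≠ 0 := by
      intro h0
      obtain ⟨hA0, hB0⟩ := Int.gcd_eq_zero_iff.mp h0
      apply hab
      constructor
      · have h6 : (a.val : ℤ) = 0 := hA0
        have : a.val = 0 := by exact_mod_cast h6
        exact (ZMod.val_eq_zero a).mp this
      · have h6 : (b.val : ℤ) = 0 := hB0
        have : b.val = 0 := by exact_mod_cast h6
        exact (ZMod.val_eq_zero b).mp this
    set G : ℤ := (Int.gcd A B : ℤ) with hGdef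
    have hG0 : G ≠ 0 := by
      simp only [hGdef]
      exact_mod_cast hG
    have hGA : G ∣ A := Int.gcd_dvd_left A B
    have hGB : G ∣ B := Int.gcd_dvd_right A B
    have hbez : A * Int.gcdA A B + B * Int.gcdB A B = G := (Int.gcd_eq_gcd_ab A B).symm
    set A' : ℤ := A / G with hA'def
    set B' : ℤ := B / G with hB'def
    have hA : A = G * A' := (Int.mul_ediv_cancel' hGA).symm
    have hB : B = G * B' := (Int.mul_ediv_cancel' hGB).symm
    have h3 : A' * Int.gcdA A B + B' * Int.gcdB A B = 1 := by
      apply mul_left_cancel₀ hG0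
      rw [mul_one]
      calc G * (A' * Int.gcdA A B + B' * Int.gcdB A B)
          = A * Int.gcdA A B + B * Int.gcdB A B := by rw [hA, hB]; ring
        _ = G := hbez
    have h4 : Int.gcd A' B' = 1 := Int.gcd_div_gcd_div_gcd (Nat.pos_of_ne_zero hG)
    have hbez' : A' * Int.gcdA A' B' + B' * Int.gcdB A' B' = 1 := by
      have h5 := (Int.gcd_eq_gcd_ab A' B').symm
      rw [h4] at h5
      exact_mod_cast h5
    have ha : ((A : ℤ) : ZMod m) = a := by
      rw [hAdef]; push_cast [ZMod.natCast_zmod_val]; try rfl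
    have hb : ((B : ℤ) : ZMod m) = b := by
      rw [hBdef]; push_cast [ZMod.natCast_zmod_val]; try rfl
    have h2 : A * B' = B * A' := by rw [hA, hB]; ring
    refine ⟨((Int.gcdA A B : ℤ) : ZMod m), ((Int.gcdB A B : ℤ) : ZMod m),
      ((A' : ℤ) : ZMod m), ((B' : ℤ) : ZMod m), ?_, ?_,
      ((Int.gcdA A' B' : ℤ) : ZMod m), ((Int.gcdB A' B' : ℤ) : ZMod m), ?_⟩
    · rw [← ha, ← hb]
      exact_mod_cast congrArg (fun z : ℤ => (z : ZMod m)) h2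
    · have h7 := congrArg (fun z : ℤ => (z : ZMod m)) h3
      push_cast at h7
      linear_combination h7
    · have h7 := congrArg (fun z : ℤ => (z : ZMod m)) hbez'
      push_cast at h7
      linear_combination h7






lemma L1 {m : ℕ} [NeZero m] : ∀ (t : ℕ) (l : (Fin (t+1) → ZMod m) →+ ZMod m),
    ∃ ι : (Fin t → ZMod m) →+ (Fin (t+1) → ZMod m),
      Function.Injective ι ∧ ∀ x, l (ι x) = 0 := by
  intro t
  induction t with
  | zero =>
    intro l
    exact ⟨0, Function.injective_of_subsingleton _, fun x => by simp⟩
  | succ t IH =>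
    intro l
    obtain ⟨p, q, a', b', h1, h2, α, β, h3⟩ :=
      pair_exists m (l (Pi.single 0 1)) (l (Pi.single 1 1))
    have hρadd : ∀ z w : Fin (t+1) → ZMod m,
        (Fin.cons ((z+w) 0 * p) (Fin.cons ((z+w) 0 * q) (fun i => (z+w) i.succ))
          : Fin (t+2) → ZMod m)
        = Fin.cons (z 0 * p) (Fin.cons (z 0 * q) (fun i => z i.succ))
          + Fin.cons (w 0 * p) (Fin.cons (w 0 * q) (fun i => w i.succ)) := by
      intro z w
      funext j
      refine Fin.cases ?_ (fun i => ?_) j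
      · simp [add_mul]
      · refine Fin.cases ?_ (fun i' => ?_) i <;> simp [add_mul]
    set ρ : (Fin (t+1) → ZMod m) →+ (Fin (t+2) → ZMod m) :=
      AddMonoidHom.mk' (fun z => Fin.cons (z 0 * p) (Fin.cons (z 0 * q) (fun i => z i.succ)))
        hρadd with hρ
    have hρ0 : ∀ z, ρ z 0 = z 0 * p := fun z => rfl
    have hρ1 : ∀ z, ρ z 1 = z 0 * q := by
      intro z
      rw [show (1 : Fin (t+2)) = (0 : Fin (t+1)).succ from (Fin.succ_zero_eq_one).symm]
      simp [hρ]
    have hρss : ∀ z (i : Fin t), ρ z i.succ.succ = z i.succ := by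
      intro z i; simp [hρ]
    obtain ⟨ι', hι'inj, hι'⟩ := IH (l.comp ρ)
    set w : Fin (t+2) → ZMod m :=
      b' • (Pi.single 0 1 : Fin (t+2) → ZMod m) - a' • (Pi.single 1 1 : Fin (t+2) → ZMod m)
      with hw
    have h01 : (1 : Fin (t+2)) ≠ 0 := by simp [Fin.ext_iff]
    have hss0 : ∀ i : Fin t, (i.succ.succ : Fin (t+2)) ≠ 0 := fun i => Fin.succ_ne_zero _
    have hss1 : ∀ i : Fin t, (i.succ.succ : Fin (t+2)) ≠ 1 := by
      intro i
      simp [Fin.ext_iff]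
    have hw0 : w 0 = b' := by
      simp [hw, Pi.single_eq_of_ne (Ne.symm h01)]
    have hw1 : w 1 = -a' := by
      simp [hw, Pi.single_eq_of_ne h01]
    have hwss : ∀ i : Fin t, w i.succ.succ = 0 := by
      intro i
      simp [hw, Pi.single_eq_of_ne (hss0 i), Pi.single_eq_of_ne (hss1 i)]
    have hlw : l w = 0 := by
      rw [hw, map_sub, map_zmod_smulAux l, map_zmod_smulAux l, smul_eq_mul, smul_eq_mul]
      linear_combination h1
    have hιadd : ∀ v v' : Fin (t+1) → ZMod m,
        ρ (ι' (fun i : Fin t => (v + v') i.succ)) + (v + v') 0 • w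
        = (ρ (ι' (fun i : Fin t => v i.succ)) + v 0 • w)
          + (ρ (ι' (fun i : Fin t => v' i.succ)) + v' 0 • w) := by
      intro v v'
      have htail : (fun i : Fin t => (v + v') i.succ)
          = (fun i : Fin t => v i.succ) + (fun i : Fin t => v' i.succ) := rfl
      rw [htail, map_add, map_add, show (v + v') 0 = v 0 + v' 0 from rfl, add_smul]
      abel
    refine ⟨AddMonoidHom.mk' (fun v => ρ (ι' (fun i : Fin t => v i.succ)) + v 0 • w) hιadd, ?_, ?_⟩
    · rw [injective_iff_map_eq_zero]
      intro v hv
      replace hv : ρ (ι' (fun i : Fin t => v i.succ)) + v 0 • w = 0 := hv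
      have e0 : (ι' (fun i : Fin t => v i.succ)) 0 * p + v 0 * b' = 0 := by
        have h := congrFun hv 0
        simpa [hρ0, hw0] using h
      have e1 : (ι' (fun i : Fin t => v i.succ)) 0 * q + v 0 * (-a') = 0 := by
        have h := congrFun hv 1
        simpa [hρ1, hw1] using h
      have hu0 : (ι' (fun i : Fin t => v i.succ)) 0 = 0 := by
        linear_combination a' * e0 + b' * e1 - (ι' (fun i : Fin t => v i.succ)) 0 * h2
      have eb : v 0 * b' = 0 := by
        rw [hu0] at e0; linear_combination e0
      have ea : v 0 * a' = 0 := by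
        rw [hu0] at e1; linear_combination -e1
      have hv0 : v 0 = 0 := by
        linear_combination α * ea + β * eb - v 0 * h3
      have hutail : ∀ i : Fin t, (ι' (fun i : Fin t => v i.succ)) i.succ = 0 := by
        intro i
        have h := congrFun hv i.succ.succ
        simpa [hρss, hwss i] using h
      have hueq : ι' (fun i : Fin t => v i.succ) = 0 := by
        funext j
        refine Fin.cases ?_ (fun i => ?_) j
        · exact hu0
        · exact hutail i
      have htail0 : (fun i : Fin t => v i.succ) = 0 :=
        (injective_iff_map_eq_zero ι').mp hι'inj _ hueq
      funext j
      refine Fin.cases ?_ (fun i => ?_) j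
      · exact hv0
      · exact congrFun htail0 i
    · intro x
      show l (ρ (ι' (fun i : Fin t => x i.succ)) + x 0 • w) = 0
      rw [map_add, map_zmod_smulAux l, hlw, smul_zero, add_zero]
      exact hι' _

lemma L2 {m : ℕ} [NeZero m] : ∀ (n r s : ℕ), s = n + r →
    ∀ ψ : (Fin s → ZMod m) →+ (Fin n → ZMod m),
    ∃ ι : (Fin r → ZMod m) →+ (Fin s → ZMod m),
      Function.Injective ι ∧ ∀ x, ψ (ι x) = 0 := by
  intro n
  induction n with
  | zero =>
    intro r s hs ψ
    obtain rfl : s = r := by omega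
    exact ⟨AddMonoidHom.id _, fun _ _ h => h, fun x => funext fun i : Fin 0 => i.elim0⟩
  | succ n IH =>
    intro r s hs ψ
    obtain rfl : s = (n + r) + 1 := by omega
    obtain ⟨ι₁, h₁inj, h₁⟩ :=
      L1 (n + r) ((Pi.evalAddMonoidHom (fun _ => ZMod m) (0 : Fin (n+1))).comp ψ)
    obtain ⟨ι₂, h₂inj, h₂⟩ := IH r (n + r) rfl
      (((AddMonoidHom.mk' (fun (y : Fin (n+1) → ZMod m) => fun i : Fin n => y i.succ)
        (fun y z => rfl)).comp ψ).comp ι₁)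
    refine ⟨ι₁.comp ι₂, h₁inj.comp h₂inj, ?_⟩
    intro x
    funext j
    refine Fin.cases ?_ (fun i => ?_) j
    · exact h₁ (ι₂ x)
    · exact congrFun (h₂ x) i






variable {m : ℕ}

lemma zero_mem_mset (G : Type*) [AddCommGroup G] :
    0 ∈ {r : ℕ | ∃ f : (Fin r → ZMod m) →+ G, Function.Injective f} :=
  ⟨0, Function.injective_of_subsingleton _⟩

lemma mem_le_card (hm : 2 ≤ m) (G : Type*) [AddCommGroup G] [Finite G] {r : ℕ}
    (hr : r ∈ {r : ℕ | ∃ f : (Fin r → ZMod m) →+ G, Function.Injective f}) :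
    r ≤ Nat.card G := by
  haveI : NeZero m := ⟨by omega⟩
  obtain ⟨φ, hφ⟩ := hr
  have h1 := Nat.card_le_card_of_injective φ hφ
  rw [Nat.card_fun, Nat.card_zmod, Nat.card_eq_fintype_card, Fintype.card_fin] at h1
  calc r ≤ 2 ^ r := (Nat.lt_two_pow_self (n := r)).le
    _ ≤ m ^ r := Nat.pow_le_pow_left hm r
    _ ≤ Nat.card G := h1

lemma bdd_mset (hm : 2 ≤ m) (G : Type*) [AddCommGroup G] [Finite G] :
    BddAbove {r : ℕ | ∃ f : (Fin r → ZMod m) →+ G, Function.Injective f} :=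
  ⟨Nat.card G, fun _ hr => mem_le_card hm G hr⟩

lemma mrank_mem (hm : 2 ≤ m) (G : Type*) [AddCommGroup G] [Finite G] :
    ∃ φ : (Fin (mrank m G) → ZMod m) →+ G, Function.Injective φ :=
  Nat.sSup_mem ⟨0, zero_mem_mset G⟩ (bdd_mset hm G)

lemma le_mrank (hm : 2 ≤ m) (G : Type*) [AddCommGroup G] [Finite G] {r : ℕ}
    (hr : ∃ φ : (Fin r → ZMod m) →+ G, Function.Injective φ) :
    r ≤ mrank m G :=
  le_csSup (bdd_mset hm G) hr

lemma mrank_congr {G H : Type*} [AddCommGroup G] [AddCommGroup H] (e : G ≃+ H) :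
    mrank m G = mrank m H := by
  unfold mrank
  congr 1
  ext r
  constructor
  · rintro ⟨φ, hφ⟩
    exact ⟨e.toAddMonoidHom.comp φ, e.injective.comp hφ⟩
  · rintro ⟨φ, hφ⟩
    exact ⟨e.symm.toAddMonoidHom.comp φ, e.symm.injective.comp hφ⟩

lemma mrank_pi (hm : 2 ≤ m) (n : ℕ) : mrank m (Fin n → ZMod m) = n := by
  haveI : NeZero m := ⟨by omega⟩
  refine le_antisymm (csSup_le ⟨0, zero_mem_mset _⟩ ?_) (le_mrank hm _ ⟨AddMonoidHom.id _, fun _ _ h => h⟩)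
  rintro r ⟨φ, hφ⟩
  have h1 := Nat.card_le_card_of_injective φ hφ
  rw [Nat.card_fun, Nat.card_fun, Nat.card_zmod, Nat.card_eq_fintype_card, Fintype.card_fin,
    Nat.card_eq_fintype_card, Fintype.card_fin] at h1
  exact (Nat.pow_le_pow_iff_right (by omega : 1 < m)).mp h1

lemma mrank_prod (hm : 2 ≤ m) (n : ℕ) (D : Type*) [AddCommGroup D] [Finite D] :
    mrank m ((Fin n → ZMod m) × D) = n + mrank m D := by
  haveI : NeZero m := ⟨by omega⟩
  refine le_antisymm (csSup_le ⟨0, zero_mem_mset _⟩ ?_) ?_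
  · rintro s ⟨φ, hφ⟩
    rcases le_or_gt s n with h | h
    · exact le_trans h (Nat.le_add_right _ _)
    · obtain ⟨r, rfl⟩ : ∃ r, s = n + r := ⟨s - n, by omega⟩
      obtain ⟨ι, hιinj, hψι⟩ := L2 n r (n + r) rfl ((AddMonoidHom.fst _ _).comp φ)
      have hκ : Function.Injective ((AddMonoidHom.snd (Fin n → ZMod m) D).comp (φ.comp ι)) := by
        rw [injective_iff_map_eq_zero]
        intro x hx
        have h2 : φ (ι x) = 0 := by
          have hfst : (φ (ι x)).1 = 0 := hψι x
          have hsnd : (φ (ι x)).2 = 0 := hx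
          exact Prod.ext hfst hsnd
        have h3 : ι x = 0 := hφ (by rw [h2, map_zero])
        exact hιinj (by rw [h3, map_zero])
      have h4 : r ≤ mrank m D := le_mrank hm D ⟨_, hκ⟩
      exact add_le_add_right h4 n
  · obtain ⟨j, hj⟩ := mrank_mem hm D
    have hadd : ∀ x y : Fin (n + mrank m D) → ZMod m,
        ((fun i : Fin n => (x + y) (Fin.castAdd (mrank m D) i)), j (fun i : Fin (mrank m D) => (x + y) (Fin.natAdd n i)))
        = ((fun i : Fin n => x (Fin.castAdd (mrank m D) i)), j (fun i : Fin (mrank m D) => x (Fin.natAdd n i)))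
          + ((fun i : Fin n => y (Fin.castAdd (mrank m D) i)), j (fun i : Fin (mrank m D) => y (Fin.natAdd n i))) := by
      intro x y
      have h5 : (fun i : Fin (mrank m D) => (x + y) (Fin.natAdd n i))
          = (fun i : Fin (mrank m D) => x (Fin.natAdd n i)) + (fun i : Fin (mrank m D) => y (Fin.natAdd n i)) := rfl
      rw [h5, map_add]
      rfl
    refine le_mrank hm _ ⟨AddMonoidHom.mk' (fun x =>
      ((fun i : Fin n => x (Fin.castAdd (mrank m D) i)), j (fun i : Fin (mrank m D) => x (Fin.natAdd n i)))) hadd, ?_⟩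
    rw [injective_iff_map_eq_zero]
    intro x hx
    replace hx : ((fun i : Fin n => x (Fin.castAdd (mrank m D) i)),
        j (fun i : Fin (mrank m D) => x (Fin.natAdd n i))) = 0 := hx
    have h1 : ∀ i : Fin n, x (Fin.castAdd (mrank m D) i) = 0 := fun i =>
      congrFun (congrArg Prod.fst hx) i
    have h2 : (fun i : Fin (mrank m D) => x (Fin.natAdd n i)) = 0 := by
      apply hj
      have h6 : (j fun i : Fin (mrank m D) => x (Fin.natAdd n i)) = 0 := congrArg Prod.snd hx
      rw [h6, map_zero]
    funext k
    refine Fin.addCases ?_ ?_ k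
    · exact h1
    · exact fun i => congrFun h2 i










lemma card_mul {A B C : Type*} [AddCommGroup A] [AddCommGroup B] [AddCommGroup C]
    [Finite A] [Finite B] [Finite C] (f : A →+ B) (g : B →+ C)
    (hf : Function.Injective f) (hg : Function.Surjective g)
    (hexact : f.range = g.ker) :
    Nat.card B = Nat.card A * Nat.card C := by
  have h1 := AddSubgroup.card_eq_card_quotient_mul_card_addSubgroup g.ker
  have h2 : Nat.card (B ⧸ g.ker) = Nat.card C :=
    Nat.card_congr (QuotientAddGroup.quotientKerEquivOfSurjective g hg).toEquiv
  have h3 : Nat.card A = Nat.card f.range :=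
    Nat.card_congr (AddMonoidHom.ofInjective hf).toEquiv
  rw [h1, h2, h3, hexact, Nat.mul_comm]

lemma caseA (m : ℕ) [NeZero m] (hm : 2 ≤ m) (n : ℕ)
    (A B C : Type*) [AddCommGroup A] [AddCommGroup B] [AddCommGroup C]
    [Finite A] [Finite B] [Finite C]
    [Module (ZMod m) A] [Module (ZMod m) B]
    (f : A →+ B) (g : B →+ C)
    (hf : Function.Injective f) (hg : Function.Surjective g)
    (hexact : f.range = g.ker)
    (eA : A ≃+ (Fin n → ZMod m)) :
    mrank m B = mrank m A + mrank m C := by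
  have hcard : Nat.card B = Nat.card A * Nat.card C := card_mul f g hf hg hexact
  · let f' : A →ₗ[ZMod m] B := f.toZModLinearMap m
    have hf' : Function.Injective (⇑f') := hf
    let eAlin : A →ₗ[ZMod m] (Fin n → ZMod m) := eA.toAddMonoidHom.toZModLinearMap m
    let e' := LinearEquiv.ofInjective f' hf'
    have hext : ∀ i : Fin n, ∃ Q : B →ₗ[ZMod m] ULift (ZMod m),
        ∀ x : LinearMap.range f', Q ((LinearMap.range f').subtype x)
          = ULift.up ((eA (e'.symm x)) i) := by
      intro i
      obtain ⟨Q, hQ⟩ := (inj_ulift m (by omega)).out ((LinearMap.range f').subtype)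
        (Submodule.injective_subtype _)
        (ULift.moduleEquiv.symm.toLinearMap ∘ₗ (LinearMap.proj i) ∘ₗ
          (eAlin ∘ₗ e'.symm.toLinearMap))
      exact ⟨Q, fun x => hQ x⟩
    choose Q hQ using hext
    have hρadd : ∀ b b' : B, eA.symm (fun i => (Q i (b + b')).down)
        = eA.symm (fun i => (Q i b).down) + eA.symm (fun i => (Q i b').down) := by
      intro b b'
      rw [← map_add]
      congr 1
      funext i
      show (Q i (b + b')).down = (Q i b).down + (Q i b').down
      rw [map_add]
      rfl
    set ρ : B →+ A := AddMonoidHom.mk' (fun b => eA.symm (fun i => (Q i b).down)) hρadd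
      with hρdef
    have hρ : ∀ a : A, ρ (f a) = a := by
      intro a
      have h9 : ∀ i, Q i (f a) = ULift.up ((eA a) i) := by
        intro i
        have h10 := hQ i (e' a)
        have h11 : ((LinearMap.range f').subtype (e' a)) = f a := by
          simp only [Submodule.coe_subtype, e', LinearEquiv.ofInjective_apply]
          rfl
        rw [h11, e'.symm_apply_apply] at h10
        exact h10
      show eA.symm (fun i => (Q i (f a)).down) = a
      have h12 : (fun i => (Q i (f a)).down) = eA a := by
        funext i
        rw [h9 i]
      rw [h12, eA.symm_apply_apply]
    have hinj : Function.Injective (ρ.prod g) := by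
      rw [injective_iff_map_eq_zero]
      intro b hb
      have hgb : g b = 0 := congrArg Prod.snd hb
      have hρb : ρ b = 0 := congrArg Prod.fst hb
      have hbmem : b ∈ f.range := by
        rw [hexact]
        exact AddMonoidHom.mem_ker.mpr hgb
      obtain ⟨a, rfl⟩ := hbmem
      rw [hρ a] at hρb
      rw [hρb, map_zero]
    have hbij : Function.Bijective (ρ.prod g) :=
      (Nat.bijective_iff_injective_and_card _).mpr
        ⟨hinj, by rw [Nat.card_prod, hcard]⟩
    have e := AddEquiv.ofBijective _ hbij
    have h13 : mrank m B = mrank m ((Fin n → ZMod m) × C) :=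
      mrank_congr (e.trans (AddEquiv.prodCongr eA (AddEquiv.refl C)))
    rw [h13, mrank_prod hm n C, mrank_congr (m := m) eA, mrank_pi hm n]

lemma caseC (m : ℕ) [NeZero m] (hm : 2 ≤ m) (n : ℕ)
    (A B C : Type*) [AddCommGroup A] [AddCommGroup B] [AddCommGroup C]
    [Finite A] [Finite B] [Finite C]
    [Module (ZMod m) B] [Module (ZMod m) C]
    (f : A →+ B) (g : B →+ C)
    (hf : Function.Injective f) (hg : Function.Surjective g)
    (hexact : f.range = g.ker)
    (eC : C ≃+ (Fin n → ZMod m)) :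
    mrank m B = mrank m A + mrank m C := by
  have hcard : Nat.card B = Nat.card A * Nat.card C := card_mul f g hf hg hexact
  · choose sec hsec using fun i : Fin n => hg (eC.symm (Pi.single i 1))
    have hsadd : ∀ x y : Fin n → ZMod m,
        (∑ i, (x + y) i • sec i) = (∑ i, x i • sec i) + (∑ i, y i • sec i) := by
      intro x y
      rw [← Finset.sum_add_distrib]
      refine Finset.sum_congr rfl fun i _ => ?_
      show (x i + y i) • sec i = _
      rw [add_smul]
    set S : (Fin n → ZMod m) →+ B := AddMonoidHom.mk' (fun x => ∑ i, x i • sec i) hsadd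
      with hSdef
    have hsmul_symm : ∀ (z : ZMod m) (v : Fin n → ZMod m),
        eC.symm (z • v) = z • eC.symm v := fun z v =>
      map_zmod_smulAux eC.symm.toAddMonoidHom z v
    have hgS : ∀ x, g (S x) = eC.symm x := by
      intro x
      show g (∑ i, x i • sec i) = _
      rw [map_sum]
      have h7 : ∀ i ∈ Finset.univ, g (x i • sec i)
          = eC.symm (x i • (Pi.single i 1 : Fin n → ZMod m)) := by
        intro i _
        rw [map_zmod_smulAux g, hsec i, hsmul_symm]
      rw [Finset.sum_congr rfl h7, ← map_sum]
      congr 1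
      have h8 : ∀ i ∈ Finset.univ, x i • (Pi.single i (1 : ZMod m) : Fin n → ZMod m)
          = Pi.single i (x i) := by
        intro i _
        funext j
        by_cases hji : j = i
        · subst hji
          simp
        · simp [Pi.single_eq_of_ne hji]
      rw [Finset.sum_congr rfl h8, Finset.univ_sum_single]
    have hinj : Function.Injective (f.coprod (S.comp eC.toAddMonoidHom)) := by
      rw [injective_iff_map_eq_zero]
      rintro ⟨a, c⟩ hac
      replace hac : f a + S (eC c) = 0 := by
        simpa [AddMonoidHom.coprod_apply] using hac
      have hgfa : g (f a) = 0 := by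
        have : f a ∈ g.ker := by
          rw [← hexact]
          exact ⟨a, rfl⟩
        exact AddMonoidHom.mem_ker.mp this
      have hc : c = 0 := by
        have h14 := congrArg g hac
        rw [map_add, hgfa, zero_add, hgS, map_zero] at h14
        have := congrArg eC h14
        rw [eC.apply_symm_apply, map_zero] at this
        exact eC.injective (by rw [this, map_zero])
      have ha : a = 0 := by
        rw [hc, map_zero, map_zero, add_zero] at hac
        exact hf (by rw [hac, map_zero])
      rw [ha, hc]
      rfl
    have hbij : Function.Bijective (f.coprod (S.comp eC.toAddMonoidHom)) :=
      (Nat.bijective_iff_injective_and_card _).mpr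
        ⟨hinj, by rw [Nat.card_prod, hcard]⟩
    have e := (AddEquiv.ofBijective _ hbij).symm
    have h13 : mrank m B = mrank m ((Fin n → ZMod m) × A) :=
      mrank_congr (e.trans ((AddEquiv.prodCongr (AddEquiv.refl A) eC).trans
        AddEquiv.prodComm))
    rw [h13, mrank_prod hm n A, mrank_congr (m := m) eC, mrank_pi hm n]
    exact Nat.add_comm _ _

end MrankAux

theorem stmt3 (m : ℕ) (hm : 2 ≤ m) (n : ℕ)
    (A B C : Type*) [AddCommGroup A] [AddCommGroup B] [AddCommGroup C]
    [Finite A] [Finite B] [Finite C]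
    (hA : ∀ a : A, m • a = 0) (hB : ∀ b : B, m • b = 0) (hC : ∀ c : C, m • c = 0)
    (f : A →+ B) (g : B →+ C)
    (hf : Function.Injective f) (hg : Function.Surjective g)
    (hexact : f.range = g.ker)
    (hiso : Nonempty (A ≃+ (Fin n → ZMod m)) ∨ Nonempty (C ≃+ (Fin n → ZMod m))) :
    mrank m B = mrank m A + mrank m C := by
  haveI : NeZero m := ⟨by omega⟩
  letI : Module (ZMod m) A := AddCommGroup.zmodModule hA
  letI : Module (ZMod m) B := AddCommGroup.zmodModule hB
  letI : Module (ZMod m) C := AddCommGroup.zmodModule hC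
  rcases hiso with ⟨⟨eA⟩⟩ | ⟨⟨eC⟩⟩
  · exact MrankAux.caseA m hm n A B C f g hf hg hexact eA
  · exact MrankAux.caseC m hm n A B C f g hf hg hexact eC
end

section
/- Let K be a number field, S a finite set of finite places of K, m ≥ 2 an integer. There is an exact sequence 0 → O_{K,S}^×/(O_{K,S}^×)^m → H → Cl(O_{K,S})[m] → 0, where H is the subgroup of K^×/(K^×)^m consisting of classes z with v_𝔭(z) ≡ 0 (mod m) for all finite places 𝔭 ∉ S, O_{K,S} is the ring of S-integers, and Cl(O_{K,S})[m] is the m-torsion of its class group. In particular the map H → Cl(O_{K,S})[m] sending the class of z to the class of the ideal 𝔞 with 𝔞^m = (z)·(S-part) is surjective with kernel the image of the S-units. -/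
open IsDedekindDomain FractionalIdeal NumberField
open scoped Multiplicative nonZeroDivisors

/-- `v_𝔭(z) ≡ 0 (mod m)` for every height-one prime `𝔭` of `A`.  When `A` is the
ring of `S`-integers of a number field `K`, the height-one primes of `A` are
exactly the finite places of `K` not in `S`, so this says that the class of `z`
in `K^×/(K^×)^m` lies in the subgroup `H`. -/
def AllValsDivisible (A : Type*) {K : Type*} [CommRing A] [IsDedekindDomain A] [Field K]
    [Algebra A K] [IsFractionRing A K] (m : ℕ) (z : Kˣ) : Prop :=
  ∀ v : HeightOneSpectrum A, ∃ n : ℤ,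
    v.valuation K (z : K) = ((Multiplicative.ofAdd (m * n) : Multiplicative ℤ) : WithZero (Multiplicative ℤ))

open IsDedekindDomain FractionalIdeal NumberField
open scoped Multiplicative nonZeroDivisors

section Aux

variable {R : Type*} [CommRing R] [IsDedekindDomain R] {K : Type*} [Field K]
  [Algebra R K] [IsFractionRing R K]

/-- Valuation of a nonzero element vs count of its span. -/
theorem my_valuation_eq_count (v : HeightOneSpectrum R) {z : K} (hz : z ≠ 0) :
    v.valuation K z =
      ((Multiplicative.ofAdd (-(FractionalIdeal.count K v (spanSingleton R⁰ z))) :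
        Multiplicative ℤ) : WithZero (Multiplicative ℤ)) := by
  classical
  obtain ⟨⟨n, d⟩, rfl⟩ := IsLocalization.mk'_surjective R⁰ z
  have hn : n ≠ 0 := by
    rintro rfl
    simp at hz
  have hspan : spanSingleton R⁰ (IsLocalization.mk' K n d) ≠ 0 :=
    spanSingleton_ne_zero_iff.mpr hz
  have haJ : spanSingleton R⁰ (IsLocalization.mk' K n d) =
      spanSingleton R⁰ ((algebraMap R K) (d : R))⁻¹ * ↑(Ideal.span {n} : Ideal R) := by
    rw [coeIdeal_span_singleton, spanSingleton_mul_spanSingleton]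
    apply congr_arg
    rw [IsFractionRing.mk'_eq_div, div_eq_mul_inv, mul_comm]
  rw [FractionalIdeal.count_well_defined K v hspan haJ, v.valuation_of_mk',
    v.intValuation_if_neg hn, v.intValuation_if_neg (nonZeroDivisors.coe_ne_zero d),
    WithZero.exp, WithZero.exp, ← WithZero.coe_div, WithZero.coe_inj, ← ofAdd_sub]
  congr 1
  ring

theorem my_eq_of_count_eq {I J : FractionalIdeal R⁰ K} (hI : I ≠ 0) (hJ : J ≠ 0)
    (h : ∀ v : HeightOneSpectrum R, FractionalIdeal.count K v I = FractionalIdeal.count K v J) :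
    I = J := by
  rw [← FractionalIdeal.finprod_heightOneSpectrum_factorization' (K := K) hI,
    ← FractionalIdeal.finprod_heightOneSpectrum_factorization' (K := K) hJ]
  exact finprod_congr fun v => by rw [h v]

theorem my_torsionfree {m : ℕ} (hm : m ≠ 0) {I J : (FractionalIdeal R⁰ K)ˣ}
    (h : (I : FractionalIdeal R⁰ K) ^ m = (J : FractionalIdeal R⁰ K) ^ m) : I = J := by
  apply Units.ext
  apply my_eq_of_count_eq I.ne_zero J.ne_zero
  intro v
  have := congr_arg (FractionalIdeal.count K v) h
  rw [FractionalIdeal.count_pow, FractionalIdeal.count_pow] at this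
  exact mul_left_cancel₀ (by exact_mod_cast hm) this

theorem my_root_exists (m : ℕ) (hm : m ≠ 0) {z : K} (hz : z ≠ 0)
    (h : ∀ v : HeightOneSpectrum R, (m : ℤ) ∣ FractionalIdeal.count K v (spanSingleton R⁰ z)) :
    ∃ I : (FractionalIdeal R⁰ K)ˣ, (I : FractionalIdeal R⁰ K) ^ m = spanSingleton R⁰ z := by
  have hspan : spanSingleton R⁰ z ≠ 0 := spanSingleton_ne_zero_iff.mpr hz
  set exps : HeightOneSpectrum R → ℤ :=
    fun v => FractionalIdeal.count K v (spanSingleton R⁰ z) / m with hexps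
  have h_fin : ∀ᶠ v : HeightOneSpectrum R in Filter.cofinite, exps v = 0 := by
    filter_upwards [FractionalIdeal.finite_factors (spanSingleton R⁰ z)] with v hv
    rw [hexps]
    simp [hv]
  set F : HeightOneSpectrum R →₀ ℤ :=
    ⟨h_fin.toFinset, exps, fun v => h_fin.mem_toFinset⟩ with hF
  set J : FractionalIdeal R⁰ K := F.prod (fun v n => (v.asIdeal : FractionalIdeal R⁰ K) ^ n)
    with hJdef
  have hJ : J ≠ 0 := by
    rw [hJdef, Finsupp.prod]
    exact Finset.prod_ne_zero_iff.mpr fun v _ => zpow_ne_zero _ (coeIdeal_ne_zero.mpr v.ne_bot)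
  have hJc : ∀ v, FractionalIdeal.count K v J = exps v := fun v =>
    FractionalIdeal.count_finsuppProd K v F
  have key : J ^ m = spanSingleton R⁰ z := by
    apply my_eq_of_count_eq (pow_ne_zero _ hJ) hspan
    intro v
    rw [FractionalIdeal.count_pow, hJc v, hexps]
    exact Int.mul_ediv_cancel' (h v)
  exact ⟨Units.mk0 J hJ, key⟩

theorem my_spanSingleton_unit (u : Rˣ) :
    spanSingleton R⁰ (algebraMap R K (u : R)) = 1 := by
  apply le_antisymm
  · exact spanSingleton_le_iff_mem.mpr (coe_mem_one R⁰ _)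
  · have : spanSingleton R⁰ (algebraMap R K (u : R)) *
        spanSingleton R⁰ (algebraMap R K ((u⁻¹ : Rˣ) : R)) = 1 := by
      rw [spanSingleton_mul_spanSingleton, ← RingHom.map_mul, Units.mul_inv, RingHom.map_one, spanSingleton_one]
    calc (1 : FractionalIdeal R⁰ K) = _ := this.symm
      _ ≤ spanSingleton R⁰ (algebraMap R K (u : R)) * 1 := by
          exact mul_le_mul_right (spanSingleton_le_iff_mem.mpr (coe_mem_one R⁰ _)) _
      _ = spanSingleton R⁰ (algebraMap R K (u : R)) := mul_one _

theorem my_spanSingleton_eq_one {t : K} (h : spanSingleton R⁰ t = 1) :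
    ∃ u : Rˣ, algebraMap R K (u : R) = t := by
  have ht : t ≠ 0 := by
    rintro rfl
    rw [spanSingleton_zero] at h
    exact zero_ne_one h
  obtain ⟨a, ha⟩ := (mem_one_iff R⁰).mp (h ▸ mem_spanSingleton_self R⁰ t)
  have hinv : spanSingleton R⁰ t⁻¹ = 1 := by
    rw [← spanSingleton_inv, h, inv_one]
  obtain ⟨b, hb⟩ := (mem_one_iff R⁰).mp (hinv ▸ mem_spanSingleton_self R⁰ t⁻¹)
  have hab : a * b = 1 := by
    apply IsFractionRing.injective R K
    rw [RingHom.map_mul, RingHom.map_one, ha, hb, mul_inv_cancel₀ ht]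
  exact ⟨⟨a, b, hab, by rwa [mul_comm] at hab⟩, ha⟩

end Aux
section Main

variable {R : Type*} [CommRing R] [IsDedekindDomain R] {K : Type*} [Field K]
  [Algebra R K] [IsFractionRing R K]

theorem my_mk_eq_one {I : (FractionalIdeal R⁰ K)ˣ} {x : K}
    (h : (I : FractionalIdeal R⁰ K) = spanSingleton R⁰ x) : ClassGroup.mk K I = 1 := by
  rw [ClassGroup.mk_eq_one_iff]
  exact ⟨x, by rw [show ((I : FractionalIdeal R⁰ K) : Submodule R K) = _ from congrArg _ h,
    coe_spanSingleton]⟩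

theorem my_principal_of_mk_eq_one {I : (FractionalIdeal R⁰ K)ˣ}
    (h : ClassGroup.mk K I = 1) : ∃ x : K, x ≠ 0 ∧ (I : FractionalIdeal R⁰ K) = spanSingleton R⁰ x := by
  rw [ClassGroup.mk_eq_one_iff] at h
  obtain ⟨x, hx⟩ := h
  have hIx : (I : FractionalIdeal R⁰ K) = spanSingleton R⁰ x := by
    apply coeToSubmodule_injective
    show ((I : FractionalIdeal R⁰ K) : Submodule R K) =
      ((spanSingleton R⁰ x : FractionalIdeal R⁰ K) : Submodule R K)
    rw [coe_spanSingleton]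
    exact hx
  refine ⟨x, ?_, hIx⟩
  rintro rfl
  exact I.ne_zero (by rw [hIx, spanSingleton_zero])

end Main

/-- Kummer theory for the ring `O_{K,S}` of `S`-integers of a number field `K`:
there is an exact sequence
`0 → O_{K,S}^×/(O_{K,S}^×)^m → H → Cl(O_{K,S})[m] → 0`,
where `H ⊆ K^×/(K^×)^m` consists of the classes with `v_𝔭(z) ≡ 0 (mod m)` for
all finite places `𝔭 ∉ S`, the map `H → Cl(O_{K,S})[m]` sending the class of
`z` to the class of the ideal `𝔞` with `𝔞^m = (z)` being surjective with kernel
the image of the `S`-units. -/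
theorem stmt7 (K : Type*) [Field K] [NumberField K]
    (S : Finset (HeightOneSpectrum (𝓞 K))) (m : ℕ) (hm : 2 ≤ m)
    -- `A` is the ring of `S`-integers `O_{K,S}` of `K`:
    (A : Type*) [CommRing A] [IsDedekindDomain A] [Algebra A K] [IsFractionRing A K]
    (hA : ∀ x : K, x ∈ (algebraMap A K).range ↔
      ∀ v : HeightOneSpectrum (𝓞 K), v ∉ S → v.valuation K x ≤ 1) :
    -- well-definedness: for `z ∈ H` there is a unique `𝔞` with `𝔞^m = (z)`
    (∀ z : Kˣ, AllValsDivisible A m z →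
      ∃! I : (FractionalIdeal A⁰ K)ˣ,
        (I : FractionalIdeal A⁰ K) ^ m = spanSingleton A⁰ (z : K)) ∧
    -- the map lands in the `m`-torsion `Cl(O_{K,S})[m]`
    (∀ (z : Kˣ) (I : (FractionalIdeal A⁰ K)ˣ), AllValsDivisible A m z →
      (I : FractionalIdeal A⁰ K) ^ m = spanSingleton A⁰ (z : K) →
      (ClassGroup.mk (R := A) (K := K) I) ^ m = 1) ∧
    -- it is a group homomorphism
    (∀ (z₁ z₂ : Kˣ) (I₁ I₂ I₃ : (FractionalIdeal A⁰ K)ˣ),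
      AllValsDivisible A m z₁ → AllValsDivisible A m z₂ →
      (I₁ : FractionalIdeal A⁰ K) ^ m = spanSingleton A⁰ (z₁ : K) →
      (I₂ : FractionalIdeal A⁰ K) ^ m = spanSingleton A⁰ (z₂ : K) →
      (I₃ : FractionalIdeal A⁰ K) ^ m = spanSingleton A⁰ ((z₁ * z₂ : Kˣ) : K) →
      ClassGroup.mk (R := A) (K := K) I₃ = ClassGroup.mk (R := A) (K := K) I₁ * ClassGroup.mk (R := A) (K := K) I₂) ∧
    -- surjectivity onto `Cl(O_{K,S})[m]`
    (∀ C : ClassGroup A, C ^ m = 1 →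
      ∃ (z : Kˣ) (I : (FractionalIdeal A⁰ K)ˣ), AllValsDivisible A m z ∧
        (I : FractionalIdeal A⁰ K) ^ m = spanSingleton A⁰ (z : K) ∧
        ClassGroup.mk (R := A) (K := K) I = C) ∧
    -- the kernel is the image of the `S`-units `O_{K,S}^×/(O_{K,S}^×)^m`
    (∀ (z : Kˣ) (I : (FractionalIdeal A⁰ K)ˣ), AllValsDivisible A m z →
      (I : FractionalIdeal A⁰ K) ^ m = spanSingleton A⁰ (z : K) →
      (ClassGroup.mk (R := A) (K := K) I = 1 ↔
        ∃ (u : Aˣ) (w : Kˣ), (z : K) = algebraMap A K (u : A) * (w : K) ^ m)) := by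
  have hm0 : m ≠ 0 := by omega
  -- translation of `AllValsDivisible` into divisibility of counts
  have hdvd : ∀ z : Kˣ, AllValsDivisible A m z → ∀ v : HeightOneSpectrum A,
      (m : ℤ) ∣ FractionalIdeal.count K v (spanSingleton A⁰ (z : K)) := by
    intro z hz v
    obtain ⟨n, hn⟩ := hz v
    rw [my_valuation_eq_count v z.ne_zero, WithZero.coe_inj] at hn
    have h2 : -(FractionalIdeal.count K v (spanSingleton A⁰ (z : K))) = m * n :=
      Multiplicative.ofAdd.injective hn
    exact ⟨-n, by rw [mul_neg, ← h2, neg_neg]⟩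
  refine ⟨?_, ?_, ?_, ?_, ?_⟩
  -- part 1
  · intro z hz
    obtain ⟨I, hI⟩ := my_root_exists m hm0 z.ne_zero (hdvd z hz)
    exact ⟨I, hI, fun J hJ => my_torsionfree hm0 (hJ.trans hI.symm)⟩
  -- part 2
  · intro z I _ hI
    rw [← map_pow]
    exact my_mk_eq_one (by rw [Units.val_pow_eq_pow_val, hI])
  -- part 3
  · intro z₁ z₂ I₁ I₂ I₃ _ _ h1 h2 h3
    have : I₃ = I₁ * I₂ := by
      apply my_torsionfree hm0
      rw [h3, Units.val_mul, Units.val_mul, mul_pow, h1, h2, spanSingleton_mul_spanSingleton]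
    rw [this, _root_.map_mul]
  -- part 4
  · intro C hC
    obtain ⟨J0, hJ0⟩ := ClassGroup.mk0_surjective (R := A) C
    set I : (FractionalIdeal A⁰ K)ˣ := FractionalIdeal.mk0 K J0 with hIdef
    have hmk : ClassGroup.mk K I = C := by rw [hIdef, ClassGroup.mk_mk0, hJ0]
    have h1 : ClassGroup.mk K (I ^ m) = 1 := by rw [map_pow, hmk, hC]
    obtain ⟨x, hx0, hx⟩ := my_principal_of_mk_eq_one h1
    have hIm : (I : FractionalIdeal A⁰ K) ^ m = spanSingleton A⁰ x := by
      rw [← hx, Units.val_pow_eq_pow_val]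
    have hAll : AllValsDivisible A m (Units.mk0 x hx0) := by
      intro v
      refine ⟨-(FractionalIdeal.count K v (I : FractionalIdeal A⁰ K)), ?_⟩
      have hcount : FractionalIdeal.count K v (spanSingleton A⁰ x) =
          m * FractionalIdeal.count K v (I : FractionalIdeal A⁰ K) := by
        rw [← hIm, FractionalIdeal.count_pow]
      rw [show ((Units.mk0 x hx0 : Kˣ) : K) = x from rfl, my_valuation_eq_count v hx0, hcount,
        WithZero.coe_inj]
      congr 1
      ring
    exact ⟨Units.mk0 x hx0, I, hAll, hIm, hmk⟩
  -- part 5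
  · intro z I hz hI
    constructor
    · intro h1
      obtain ⟨w, hw0, hw⟩ := my_principal_of_mk_eq_one h1
      have hwm : (spanSingleton A⁰ ((z : K) / w ^ m)) * spanSingleton A⁰ (w ^ m) =
          spanSingleton A⁰ (w ^ m) := by
        rw [spanSingleton_mul_spanSingleton, div_mul_cancel₀ _ (pow_ne_zero m hw0),
          ← spanSingleton_pow, ← hw, ← hI]
      have hone : spanSingleton A⁰ ((z : K) / w ^ m) = 1 := by
        have h2 := mul_right_cancel₀ (spanSingleton_ne_zero_iff.mpr (pow_ne_zero m hw0))
          (hwm.trans (one_mul (spanSingleton A⁰ (w ^ m))).symm)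
        exact h2
      obtain ⟨u, hu⟩ := my_spanSingleton_eq_one hone
      refine ⟨u, Units.mk0 w hw0, ?_⟩
      rw [show ((Units.mk0 w hw0 : Kˣ) : K) = w from rfl, hu,
        div_mul_cancel₀ _ (pow_ne_zero m hw0)]
    · rintro ⟨u, w, hw⟩
      have hIW : I = Units.mk0 (spanSingleton A⁰ (w : K))
          (spanSingleton_ne_zero_iff.mpr w.ne_zero) := by
        apply my_torsionfree hm0
        rw [hI, hw, ← spanSingleton_mul_spanSingleton, my_spanSingleton_unit, one_mul,
          Units.val_mk0, spanSingleton_pow]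
      rw [hIW]
      exact my_mk_eq_one rfl
end
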